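/- arXiv:1707.00579 — 2 statements merged into one kernel-verified Lean document; each statement's English description precedes it below -/
import Mathlib

section
/- Let N, D, M, K be natural numbers, let v ∈ ℂ^N and p ∈ ℝ^D. Suppose C_1, …, C_M ∈ ℂ^{N×N} are Hermitian matrices, c_1, …, c_M ∈ ℝ^D and b_1, …, b_M ∈ ℝ satisfy Re(tr(C_m · v v^H)) + c_m^T p < b_m for every m ∈ {1,…,M}. Further, for each n ∈ {1,…,K} let S_n ⊆ ℝ^2 be a convex set, let x_n lie in the interior of S_n, and let w_n ∈ ℝ^2. Then there exists ε > 0 such that the matrix V = v v^H + ε I is Hermitian positive definite, Re(tr(C_m V)) + c_m^T p < b_m for every m ∈ {1,…,M}, and x_n + ε w_n ∈ S_n for every n ∈ {1,…,K}. -/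
open Matrix ComplexOrder

lemma aux_posdef (N : ℕ) (v : Fin N → ℂ) {ε : ℝ} (hε : 0 < ε) :
    (Matrix.of (fun i j => v i * star (v j))
        + (ε : ℂ) • (1 : Matrix (Fin N) (Fin N) ℂ)).PosDef := by
  refine Matrix.PosDef.of_dotProduct_mulVec_pos ?_ ?_
  · show _ = _
    ext i j
    simp [Matrix.conjTranspose_apply, Matrix.one_apply, mul_comm]
    split <;> simp_all <;> simp_all [eq_comm]
  · intro y hy
    have h1 : star y ⬝ᵥ ((Matrix.of (fun i j => v i * star (v j))) *ᵥ y)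
        = star (star v ⬝ᵥ y) * (star v ⬝ᵥ y) := by
      simp only [dotProduct, Matrix.mulVec, Matrix.of_apply,
        Finset.mul_sum, Finset.sum_mul, Pi.star_apply, star_sum, star_mul',
        star_star]
      rw [Finset.sum_comm]
      congr 1; ext i; congr 1; ext j; ring
    have h2 : star y ⬝ᵥ (((ε : ℂ) • (1 : Matrix (Fin N) (Fin N) ℂ)) *ᵥ y)
        = (ε : ℂ) * (star y ⬝ᵥ y) := by
      simp [Matrix.smul_mulVec, dotProduct_smul, smul_eq_mul]
    rw [Matrix.add_mulVec, dotProduct_add, h1, h2]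
    have hpos : 0 < (ε : ℂ) * (star y ⬝ᵥ y) := by
      apply mul_pos
      · exact_mod_cast hε
      · exact Matrix.dotProduct_star_self_pos_iff.mpr hy
    have hnn : 0 ≤ star (star v ⬝ᵥ y) * (star v ⬝ᵥ y) := star_mul_self_nonneg _
    exact add_pos_of_nonneg_of_pos hnn hpos

/-- Slater point construction for the semidefinite relaxation
(Theorem 1 of the paper). -/
theorem stmt_0 (N D M K : ℕ)
    (v : Fin N → ℂ) (p : Fin D → ℝ)
    (C : Fin M → Matrix (Fin N) (Fin N) ℂ) (hC : ∀ m, (C m).IsHermitian)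
    (c : Fin M → Fin D → ℝ) (b : Fin M → ℝ)
    (hstrict : ∀ m : Fin M,
      (Matrix.trace (C m * Matrix.of fun i j => v i * star (v j))).re
        + ∑ i, c m i * p i < b m)
    (S : Fin K → Set (Fin 2 → ℝ)) (hSconv : ∀ n, Convex ℝ (S n))
    (x : Fin K → Fin 2 → ℝ) (hx : ∀ n, x n ∈ interior (S n))
    (w : Fin K → Fin 2 → ℝ) :
    ∃ ε : ℝ, 0 < ε ∧
      (Matrix.of (fun i j => v i * star (v j))
        + (ε : ℂ) • (1 : Matrix (Fin N) (Fin N) ℂ)).PosDef ∧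
      (∀ m : Fin M,
        (Matrix.trace (C m * (Matrix.of (fun i j => v i * star (v j))
          + (ε : ℂ) • (1 : Matrix (Fin N) (Fin N) ℂ)))).re
          + ∑ i, c m i * p i < b m) ∧
      (∀ n : Fin K, x n + ε • w n ∈ S n) := by
  set A : Matrix (Fin N) (Fin N) ℂ := Matrix.of (fun i j => v i * star (v j)) with hA
  have key : ∀ᶠ ε : ℝ in nhds 0,
      (∀ m : Fin M,
        (Matrix.trace (C m * (A + (ε : ℂ) • (1 : Matrix (Fin N) (Fin N) ℂ)))).re
          + ∑ i, c m i * p i < b m) ∧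
      (∀ n : Fin K, x n + ε • w n ∈ S n) := by
    refine Filter.Eventually.and ?_ ?_
    · rw [Filter.eventually_all]
      intro m
      have htr : ∀ ε : ℝ,
          (Matrix.trace (C m * (A + (ε : ℂ) • (1 : Matrix (Fin N) (Fin N) ℂ)))).re
          = (Matrix.trace (C m * A)).re + ε * (Matrix.trace (C m)).re := by
        intro ε
        simp [mul_add, Matrix.mul_smul, Matrix.trace_add, Matrix.trace_smul,
          Complex.add_re, Complex.smul_re, smul_eq_mul, Complex.mul_re]
      simp only [htr]
      have hc : ContinuousAt (fun ε : ℝ =>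
          (Matrix.trace (C m * A)).re + ε * (Matrix.trace (C m)).re
            + ∑ i, c m i * p i) 0 := by fun_prop
      have h0 : (Matrix.trace (C m * A)).re + (0:ℝ) * (Matrix.trace (C m)).re
          + ∑ i, c m i * p i < b m := by
        simpa using hstrict m
      exact hc.eventually_lt continuousAt_const h0
    · rw [Filter.eventually_all]
      intro n
      have hc : ContinuousAt (fun ε : ℝ => x n + ε • w n) 0 := by fun_prop
      have hmem : interior (S n) ∈ nhds (x n + (0:ℝ) • w n) := by
        simpa using isOpen_interior.mem_nhds (hx n)
      filter_upwards [hc.eventually_mem hmem] with ε hε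
      exact interior_subset hε
  obtain ⟨ε, hεkey, hε0⟩ :=
    ((key.filter_mono nhdsWithin_le_nhds).and
      (self_mem_nhdsWithin : ∀ᶠ ε in nhdsWithin (0:ℝ) (Set.Ioi 0), ε ∈ Set.Ioi 0)).exists
  exact ⟨ε, hε0, aux_posdef N v hε0, hεkey.1, hεkey.2⟩
end

section
/- Let G be a tree on the vertex set {1, …, N}, i.e., a connected acyclic simple graph. Let m : {1, …, N} → ℝ satisfy m_i > 0 for all i, and for each pair of adjacent vertices i, j let W_{ij} ∈ ℂ satisfy W_{ji} = conj(W_{ij}) and |W_{ij}|² = m_i · m_j. Then there exists a vector v ∈ ℂ^N such that |v_i|² = m_i for every vertex i and v_i · conj(v_j) = W_{ij} for every pair of adjacent vertices i, j. -/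
open SimpleGraph

section Aux

variable {N : ℕ} {G : SimpleGraph (Fin N)}

/-- Phase factor attached to a dart. -/
noncomputable def dartFactor (W : Fin N → Fin N → ℂ) (m : Fin N → ℝ) (d : G.Dart) : ℂ :=
  (starRingEnd ℂ) (W d.fst d.snd) / (Real.sqrt (m d.fst * m d.snd) : ℝ)

/-- Phase of a walk: product of dart factors. -/
noncomputable def walkPhase (W : Fin N → Fin N → ℂ) (m : Fin N → ℝ) {u w : Fin N}
    (p : G.Walk u w) : ℂ :=
  (p.darts.map (dartFactor W m)).prod

lemma walkPhase_concat (W : Fin N → Fin N → ℂ) (m : Fin N → ℝ) {u v w : Fin N}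
    (p : G.Walk u v) (h : G.Adj v w) :
    walkPhase W m (p.concat h) = walkPhase W m p * dartFactor W m ⟨(v, w), h⟩ := by
  simp [walkPhase, SimpleGraph.Walk.darts_concat]

end Aux

/-- PSD rank-1 matrix completion on a tree ([Th. 5, Bose2012b],
used for Corollary 2 and the bus voltage recovery of Section V-C): given
positive prescribed squared magnitudes `m i` and, on every edge of a tree,
prescribed products `W i j` with `W j i = conj (W i j)` and `|W i j|² = m i · m j`,
there is a vector `v` with `|v i|² = m i` and `v i · conj (v j) = W i j` on
every edge. -/
theorem stmt_16 (N : ℕ) (G : SimpleGraph (Fin N)) (hG : G.IsTree)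
    (m : Fin N → ℝ) (hm : ∀ i, 0 < m i)
    (W : Fin N → Fin N → ℂ)
    (hWherm : ∀ i j, G.Adj i j → W j i = star (W i j))
    (hWmag : ∀ i j, G.Adj i j → ‖W i j‖ ^ 2 = m i * m j) :
    ∃ v : Fin N → ℂ,
      (∀ i, ‖v i‖ ^ 2 = m i) ∧
      (∀ i j, G.Adj i j → v i * star (v j) = W i j) := by
  classical
  obtain ⟨r⟩ := hG.isConnected.nonempty
  -- unique paths from the root
  choose p hp hpuniq using fun i : Fin N => hG.existsUnique_path r i
  -- |W i j| = sqrt (m i * m j) on edges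
  have habsW : ∀ i j, G.Adj i j → ‖W i j‖ = Real.sqrt (m i * m j) := by
    intro i j hij
    have h1 : (0:ℝ) ≤ ‖W i j‖ := norm_nonneg _
    have := hWmag i j hij
    nlinarith [Real.sq_sqrt (mul_nonneg (hm i).le (hm j).le),
      Real.sqrt_nonneg (m i * m j)]
  have hsqrt_pos : ∀ i j : Fin N, (0:ℝ) < Real.sqrt (m i * m j) := fun i j =>
    Real.sqrt_pos.2 (mul_pos (hm i) (hm j))
  -- each dart factor has modulus 1
  have habs_f : ∀ d : G.Dart, ‖dartFactor (G := G) W m d‖ = 1 := by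
    intro d
    have hadj := d.adj
    simp only [dartFactor, norm_div, Complex.norm_conj, Complex.norm_real, Real.norm_eq_abs]
    rw [habsW _ _ hadj, abs_of_pos (hsqrt_pos _ _)]
    exact div_self (ne_of_gt (hsqrt_pos _ _))
  -- each walk phase has modulus 1
  have habs_ph : ∀ {u w : Fin N} (q : G.Walk u w),
      ‖walkPhase (G := G) W m q‖ = 1 := by
    intro u w q
    unfold walkPhase
    induction q.darts with
    | nil => simp
    | cons d l ih => simp [map_mul, ih, habs_f d]
  set v : Fin N → ℂ := fun i => (Real.sqrt (m i) : ℝ) * walkPhase (G := G) W m (p i) with hv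
  refine ⟨v, ?_, ?_⟩
  · intro i
    simp only [hv, norm_mul, Complex.norm_real, Real.norm_eq_abs, habs_ph, mul_one,
      abs_of_pos (Real.sqrt_pos.2 (hm i))]
    exact Real.sq_sqrt (hm i).le
  · intro i j hij
    -- combinatorial dichotomy: one root-path extends the other
    have key : p j = (p i).concat hij ∨ p i = (p j).concat hij.symm := by
      by_cases hjs : j ∈ (p i).support
      · right
        have ht : ((p i).takeUntil j hjs).IsPath := (hp i).takeUntil hjs
        have htj : (p i).takeUntil j hjs = p j := hpuniq j _ ht
        have hd : ((p i).dropUntil j hjs).IsPath := (hp i).dropUntil hjs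
        have hcn : (SimpleGraph.Walk.cons hij.symm SimpleGraph.Walk.nil :
            G.Walk j i).IsPath := by simp [SimpleGraph.Walk.cons_isPath_iff, hij.ne']
        have hdu : (p i).dropUntil j hjs =
            SimpleGraph.Walk.cons hij.symm SimpleGraph.Walk.nil :=
          (hG.existsUnique_path j i).unique hd hcn
        have := (p i).take_spec hjs
        rw [htj, hdu] at this
        rw [← this, SimpleGraph.Walk.concat_eq_append]
      · left
        refine (hpuniq j _ ?_).symm
        show ((p i).concat hij).IsPath
        rw [← SimpleGraph.Walk.isPath_reverse_iff, SimpleGraph.Walk.reverse_concat]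
        exact ((hp i).reverse).cons (by
          rw [SimpleGraph.Walk.support_reverse, List.mem_reverse]; exact hjs)
    have hmulconj : walkPhase (G := G) W m (p i) *
        (starRingEnd ℂ) (walkPhase (G := G) W m (p i)) = 1 := by
      rw [Complex.mul_conj, ← Complex.sq_norm, habs_ph]; norm_num
    have hmulconj' : walkPhase (G := G) W m (p j) *
        (starRingEnd ℂ) (walkPhase (G := G) W m (p j)) = 1 := by
      rw [Complex.mul_conj, ← Complex.sq_norm, habs_ph]; norm_num
    have hsprod : (Real.sqrt (m i) : ℂ) * (Real.sqrt (m j) : ℂ) =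
        (Real.sqrt (m i * m j) : ℂ) := by
      rw [← Complex.ofReal_mul, Real.sqrt_mul (hm i).le]
    have hsne : (Real.sqrt (m i * m j) : ℂ) ≠ 0 := by
      exact_mod_cast ne_of_gt (hsqrt_pos i j)
    rcases key with hkey | hkey
    · -- p j = (p i).concat hij
      have hphj : walkPhase (G := G) W m (p j) =
          walkPhase (G := G) W m (p i) * ((starRingEnd ℂ) (W i j) /
            (Real.sqrt (m i * m j) : ℝ)) := by
        rw [hkey, walkPhase_concat]; rfl
      simp only [hv, hphj]

      rw [show (star : ℂ → ℂ) = (starRingEnd ℂ) from rfl]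
      rw [show (starRingEnd ℂ) ((Real.sqrt (m j) : ℂ) *
          (walkPhase (G := G) W m (p i) *
            ((starRingEnd ℂ) (W i j) / (Real.sqrt (m i * m j) : ℝ)))) =
          (Real.sqrt (m j) : ℂ) * ((starRingEnd ℂ) (walkPhase (G := G) W m (p i)) *
            (W i j / (Real.sqrt (m i * m j) : ℝ))) by
        simp [map_mul, map_div₀, Complex.conj_ofReal]]
      field_simp
      calc _
          = ((Real.sqrt (m i) : ℂ) * (Real.sqrt (m j) : ℂ)) *
            (walkPhase (G := G) W m (p i) *
              (starRingEnd ℂ) (walkPhase (G := G) W m (p i))) * W i j := by ring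
        _ = W i j * (Real.sqrt (m i * m j) : ℝ) := by
            rw [hsprod, hmulconj]; ring
    · -- p i = (p j).concat hij.symm
      have hphi : walkPhase (G := G) W m (p i) =
          walkPhase (G := G) W m (p j) * ((starRingEnd ℂ) (W j i) /
            (Real.sqrt (m j * m i) : ℝ)) := by
        rw [hkey, walkPhase_concat]; rfl
      have hWji : (starRingEnd ℂ) (W j i) = W i j := by
        rw [hWherm i j hij]; exact Complex.conj_conj _
      simp only [hv, hphi, hWji]
      rw [show (star : ℂ → ℂ) = (starRingEnd ℂ) from rfl]
      rw [show (starRingEnd ℂ) ((Real.sqrt (m j) : ℂ) * walkPhase (G := G) W m (p j)) =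
          (Real.sqrt (m j) : ℂ) * (starRingEnd ℂ) (walkPhase (G := G) W m (p j)) by
        simp [map_mul, Complex.conj_ofReal]]
      have hsprod' : (Real.sqrt (m j) : ℂ) * (Real.sqrt (m i) : ℂ) =
          (Real.sqrt (m j * m i) : ℂ) := by
        rw [← Complex.ofReal_mul, Real.sqrt_mul (hm j).le]
      have hsne' : (Real.sqrt (m j * m i) : ℂ) ≠ 0 := by
        exact_mod_cast ne_of_gt (hsqrt_pos j i)
      field_simp
      calc _
          = ((Real.sqrt (m j) : ℂ) * (Real.sqrt (m i) : ℂ)) *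
            (walkPhase (G := G) W m (p j) *
              (starRingEnd ℂ) (walkPhase (G := G) W m (p j))) * W i j := by ring
        _ = W i j * (Real.sqrt (m j * m i) : ℝ) := by
            rw [hsprod', hmulconj']; ring
end
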